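/- Let C be a premodular G-category with Δ_0 ≠ 0, and let V be a simple object of C_α such that the Hopf link evaluation satisfies ⟨H(Λ_μ, V)⟩ = dim(Λ_μ)·dim(V) for every simple object Λ_μ of C_0. Then the encircling operator of V by ω_0 equals Δ_0·id, and consequently V is C_0-transparent. -/
import Mathlib


/-- If the Hopf link evaluations satisfy
⟨H(Λ_μ, V)⟩ = dim(Λ_μ)·dim(V) for all simple Λ_μ ∈ C₀, then the
encircling operator of V by ω₀ is the scalar t₀ = Δ₀ ≠ 0, and hence
(by the transparency criterion) V is C₀-transparent. -/
theorem hopf_unlink_implies_transparent {K : Type*} [Field K] {ι : Type*}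
    (I0 : Finset ι) (dm : ι → K) (Hopf : ι → K) (dimV : K)
    (t0 Δ0 : K)
    (hΔ : Δ0 = ∑ i ∈ I0, dm i ^ 2) (hΔne : Δ0 ≠ 0) (hdimV : dimV ≠ 0)
    (ht0 : t0 = (∑ i ∈ I0, dm i * Hopf i) / dimV)
    (hH : ∀ i ∈ I0, Hopf i = dm i * dimV)
    (transparentV : Prop)
    (hcrit : t0 ≠ 0 → transparentV) :
    t0 = Δ0 ∧ transparentV := by
  have h : t0 = Δ0 := by
    rw [ht0, hΔ, Finset.sum_congr rfl (fun i hi => by rw [hH i hi])]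
    rw [show ∑ i ∈ I0, dm i * (dm i * dimV) = (∑ i ∈ I0, dm i ^ 2) * dimV from by
      rw [Finset.sum_mul]; exact Finset.sum_congr rfl (fun i _ => by ring)]
    rw [mul_div_assoc, div_self hdimV, mul_one]
  exact ⟨h, hcrit (h ▸ hΔne)⟩
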